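/- Fix 1 ≤ q < p < ∞ and d ≥ 1, and set η_i := exp(((p+q)/(2p))^i · log η) for a fixed η ∈ (0, u), where u := exp(−2p(p+q)(2q+d) log 2 / (d(p−q)²)). Let l be the largest integer i with η_i < u, and define ζ_i := η_{i+1}^(d/(2q+d)) / η_i^(dq/(p(2q+d))). Then ζ_i / ζ_{i-1} ≥ 2 for all 1 ≤ i ≤ l, and consequently ∑_{i=0}^l ζ_i ≤ 2 ζ_l ≤ 2 exp(d(p−q)/(2p(2q+d)) · log u). -/
import Mathlib

open Real Finset

/-- The key geometric-sum estimate in the proof of Proposition `kred`: with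
`u = exp(−2p(p+q)(2q+d) log 2/(d(p−q)²))`, `η_i = η^{((p+q)/(2p))^i}` and
`ζ_i = η_{i+1}^{d/(2q+d)} / η_i^{dq/(p(2q+d))}`, one has `ζ_i/ζ_{i-1} ≥ 2` for
`1 ≤ i ≤ l` and `∑_{i=0}^l ζ_i ≤ 2 ζ_l ≤ 2 exp(d(p−q) log u/(2p(2q+d)))`. -/
theorem stmt13 (d : ℕ) (hd : 1 ≤ d) (p q : ℝ) (hq : 1 ≤ q) (hqp : q < p)
    (u η : ℝ)
    (hu : u = Real.exp (-(2 * p * (p + q) * (2 * q + d) * Real.log 2) / (d * (p - q) ^ 2)))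
    (hη : 0 < η) (hηu : η < u)
    (ηs : ℕ → ℝ) (hηs : ∀ i, ηs i = Real.exp (((p + q) / (2 * p)) ^ i * Real.log η))
    (l : ℕ) (hl : ηs l < u) (hl' : u ≤ ηs (l + 1))
    (ζ : ℕ → ℝ)
    (hζ : ∀ i, ζ i = ηs (i + 1) ^ ((d : ℝ) / (2 * q + d)) /
      ηs i ^ ((d : ℝ) * q / (p * (2 * q + d)))) :
    (∀ i, 1 ≤ i → i ≤ l → 2 ≤ ζ i / ζ (i - 1)) ∧
    (∑ i ∈ Finset.range (l + 1), ζ i) ≤ 2 * ζ l ∧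
    2 * ζ l ≤ 2 * Real.exp ((d : ℝ) * (p - q) / (2 * p * (2 * q + d)) * Real.log u) := by
  have hp : (0:ℝ) < p := by linarith
  have hq0 : (0:ℝ) < q := by linarith
  have hd0 : (0:ℝ) < d := by exact_mod_cast Nat.pos_of_ne_zero (by omega)
  have hpq : (0:ℝ) < p - q := by linarith
  have h2qd : (0:ℝ) < 2 * q + d := by linarith
  set r : ℝ := (p + q) / (2 * p) with hr
  have hr0 : 0 < r := by positivity
  have hr1 : r < 1 := by rw [hr, div_lt_one (by linarith)]; linarith
  set L : ℝ := Real.log η with hLdef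
  set c : ℝ := d * (p - q) / (2 * p * (2 * q + d)) with hc
  have hc0 : 0 < c := by positivity
  have hu0 : 0 < u := hu ▸ Real.exp_pos _
  have hlog2 : (0:ℝ) < Real.log 2 := Real.log_pos (by norm_num)
  have hlogu : Real.log u = -(2 * p * (p + q) * (2 * q + d) * Real.log 2) / (d * (p - q) ^ 2) := by
    rw [hu, Real.log_exp]
  have hu1 : u < 1 := by
    rw [hu]
    have : -(2 * p * (p + q) * (2 * q + d) * Real.log 2) / (d * (p - q) ^ 2) < 0 := by
      apply div_neg_of_neg_of_pos
      · have : 0 < 2 * p * (p + q) * (2 * q + (d:ℝ)) * Real.log 2 := by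
          apply mul_pos (mul_pos (mul_pos (by linarith : (0:ℝ) < 2 * p) (by linarith : (0:ℝ) < p + q)) h2qd) hlog2
        linarith
      · positivity
    calc Real.exp _ < Real.exp 0 := Real.exp_lt_exp.mpr this
      _ = 1 := Real.exp_zero
  have hL0 : L < 0 := Real.log_neg hη (lt_trans hηu hu1)
  have hζexp : ∀ i, ζ i = Real.exp (c * r ^ i * L) := by
    intro i
    rw [hζ, hηs, hηs,
      Real.rpow_def_of_pos (Real.exp_pos _), Real.rpow_def_of_pos (Real.exp_pos _),
      Real.log_exp, Real.log_exp, ← Real.exp_sub]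
    congr 1
    rw [pow_succ, hr, hc]
    field_simp
    ring
  have hζpos : ∀ i, 0 < ζ i := fun i => (hζexp i) ▸ Real.exp_pos _
  -- key: r^i * L < log u for i ≤ l
  have hkey : ∀ i, i ≤ l → r ^ i * L < Real.log u := by
    intro i hi
    have h1 : r ^ l * L < Real.log u := by
      have := Real.log_lt_log (Real.exp_pos _) ((hηs l) ▸ hl)
      rwa [Real.log_exp] at this
    have h2 : r ^ l ≤ r ^ i := pow_le_pow_of_le_one hr0.le hr1.le hi
    nlinarith
  have hstep : ∀ j, j + 1 ≤ l → 2 * ζ j ≤ ζ (j + 1) := by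
    intro j hj
    rw [hζexp, hζexp]
    have hA : -Real.log u < r ^ (j + 1) * (-L) := by
      have := hkey (j + 1) hj; linarith
    have hid : c * (1 - r) * (-Real.log u) = Real.log 2 * r := by
      rw [hlogu, hr, hc]; field_simp; ring
    have h1 : Real.log 2 * r ≤ (c * (1 - r)) * (r ^ (j + 1) * (-L)) := by
      calc Real.log 2 * r = c * (1 - r) * (-Real.log u) := hid.symm
        _ ≤ _ := by
          exact mul_le_mul_of_nonneg_left hA.le (mul_nonneg hc0.le (by linarith))
    have h2 : Real.log 2 ≤ c * r ^ (j + 1) * L - c * r ^ j * L := by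
      have hE : (c * r ^ (j + 1) * L - c * r ^ j * L) * r = (c * (1 - r)) * (r ^ (j + 1) * (-L)) := by
        rw [pow_succ]; ring
      nlinarith
    calc 2 * Real.exp (c * r ^ j * L) = Real.exp (Real.log 2 + c * r ^ j * L) := by
          rw [Real.exp_add, Real.exp_log (by norm_num)]
      _ ≤ Real.exp (c * r ^ (j + 1) * L) := Real.exp_le_exp.mpr (by linarith)
  have part1 : ∀ i, 1 ≤ i → i ≤ l → 2 ≤ ζ i / ζ (i - 1) := by
    intro i h1 h2
    obtain ⟨j, rfl⟩ : ∃ j, i = j + 1 := ⟨i - 1, by omega⟩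
    simp only [Nat.add_sub_cancel]
    rw [le_div_iff₀ (hζpos j)]
    have := hstep j h2
    linarith
  refine ⟨part1, ?_, ?_⟩
  · have : ∀ k, k ≤ l → (∑ i ∈ Finset.range (k + 1), ζ i) ≤ 2 * ζ k := by
      intro k
      induction k with
      | zero => intro _; simp; linarith [hζpos 0]
      | succ n ih =>
        intro hn
        rw [Finset.sum_range_succ]
        have h1 := ih (by omega)
        have h2 := hstep n hn
        linarith
    exact this l le_rfl
  · rw [hζexp]
    have h1 : r ^ l * L < Real.log u := hkey l le_rfl
    have h2 : c * r ^ l * L ≤ c * Real.log u := by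
      rw [mul_assoc]
      exact mul_le_mul_of_nonneg_left h1.le hc0.le
    have h3 : Real.exp (c * r ^ l * L) ≤ Real.exp (c * Real.log u) := Real.exp_le_exp.mpr h2
    linarith
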